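/- Let E and F be real normed spaces, k ≥ 1, and let x₁,…,x_k ∈ E and y₁,…,y_k ∈ F. Set r = sup { | ‖∑ᵢ sᵢxᵢ‖_E − ‖∑ᵢ sᵢyᵢ‖_F | : s ∈ ℝ^k, ∑ᵢ|sᵢ| = 1 }. Then: (a) there exist a real normed space V and linear isometric embeddings f : E → V and g : F → V such that ‖f(xᵢ) − g(yᵢ)‖_V ≤ r for all i; (b) r is least with this property: for every real normed space W and all linear isometric embeddings f' : E → W, g' : F → W, one has r ≤ max_i ‖f'(xᵢ) − g'(yᵢ)‖_W. -/

import Mathlib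

universe u v w

namespace HensonAux

variable {E : Type u} {F : Type v}
  [NormedAddCommGroup E] [NormedSpace ℝ E] [NormedAddCommGroup F] [NormedSpace ℝ F]
  {k : ℕ} (x : Fin k → E) (y : Fin k → F) (r : ℝ)

/-- The defining set for the amalgam seminorm at a point `p`. -/
def aset (p : E × F) : Set ℝ :=
  {c | ∃ s : Fin k → ℝ,
    c = ‖p.1 - ∑ i, s i • x i‖ + ‖p.2 + ∑ i, s i • y i‖ + r * ∑ i, |s i|}

/-- The amalgam seminorm as a bare function on `E × F`. -/
noncomputable def afun (p : E × F) : ℝ := sInf (aset x y r p)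

variable {x y r}
variable (hr0 : 0 ≤ r)

theorem aset_nonempty (p : E × F) : (aset x y r p).Nonempty := by
  refine ⟨‖p.1‖ + ‖p.2‖ + r * 0, fun _ => 0, ?_⟩
  simp

include hr0 in
theorem aset_nonneg {p : E × F} {c : ℝ} (hc : c ∈ aset x y r p) : 0 ≤ c := by
  obtain ⟨s, rfl⟩ := hc
  have h1 : (0:ℝ) ≤ ∑ i, |s i| := Finset.sum_nonneg fun i _ => abs_nonneg _
  positivity

include hr0 in
theorem aset_bddBelow (p : E × F) : BddBelow (aset x y r p) :=
  ⟨0, fun _ hc => aset_nonneg hr0 hc⟩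

include hr0 in
theorem afun_nonneg (p : E × F) : 0 ≤ afun x y r p :=
  le_csInf (aset_nonempty p) fun _ hc => aset_nonneg hr0 hc

include hr0 in
theorem afun_le {p : E × F} (s : Fin k → ℝ) :
    afun x y r p ≤ ‖p.1 - ∑ i, s i • x i‖ + ‖p.2 + ∑ i, s i • y i‖ + r * ∑ i, |s i| :=
  csInf_le (aset_bddBelow hr0 p) ⟨s, rfl⟩

include hr0 in
theorem afun_zero : afun x y r (0 : E × F) = 0 := by
  refine le_antisymm ?_ (afun_nonneg hr0 0)
  have := afun_le (x := x) (y := y) (r := r) hr0 (p := (0 : E × F)) 0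
  simpa using this

include hr0 in
theorem afun_neg_le (p : E × F) : afun x y r (-p) ≤ afun x y r p := by
  refine le_csInf (aset_nonempty p) ?_
  rintro c ⟨s, rfl⟩
  have h := afun_le (x := x) (y := y) (r := r) hr0 (p := -p) (-s)
  refine h.trans (le_of_eq ?_)
  congr 1
  · congr 1
    · rw [show (-p).1 - ∑ i, (-s) i • x i = -(p.1 - ∑ i, s i • x i) by
        simp [neg_smul, Finset.sum_neg_distrib]; abel, norm_neg]
    · rw [show (-p).2 + ∑ i, (-s) i • y i = -(p.2 + ∑ i, s i • y i) by
        simp [neg_smul, Finset.sum_neg_distrib]; abel, norm_neg]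
  · simp

include hr0 in
theorem afun_neg (p : E × F) : afun x y r (-p) = afun x y r p :=
  le_antisymm (afun_neg_le hr0 p) (by simpa using afun_neg_le hr0 (-p))

include hr0 in
theorem afun_add_le (p q : E × F) :
    afun x y r (p + q) ≤ afun x y r p + afun x y r q := by
  have key : ∀ a ∈ aset x y r p, ∀ b ∈ aset x y r q, afun x y r (p + q) ≤ a + b := by
    rintro a ⟨s, rfl⟩ b ⟨t, rfl⟩
    have h := afun_le (x := x) (y := y) (r := r) hr0 (p := p + q) (s + t)
    refine h.trans ?_
    have h1 : (p+q).1 - ∑ i, (s+t) i • x i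
        = (p.1 - ∑ i, s i • x i) + (q.1 - ∑ i, t i • x i) := by
      simp [add_smul, Finset.sum_add_distrib]; abel
    have h2 : (p+q).2 + ∑ i, (s+t) i • y i
        = (p.2 + ∑ i, s i • y i) + (q.2 + ∑ i, t i • y i) := by
      simp [add_smul, Finset.sum_add_distrib]; abel
    have h3 : r * ∑ i, |(s+t) i| ≤ r * ∑ i, |s i| + r * ∑ i, |t i| := by
      rw [← mul_add, ← Finset.sum_add_distrib]
      exact mul_le_mul_of_nonneg_left
        (Finset.sum_le_sum fun i _ => abs_add_le _ _) hr0
    calc ‖(p+q).1 - ∑ i, (s+t) i • x i‖ + ‖(p+q).2 + ∑ i, (s+t) i • y i‖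
          + r * ∑ i, |(s+t) i|
        ≤ (‖p.1 - ∑ i, s i • x i‖ + ‖q.1 - ∑ i, t i • x i‖)
          + (‖p.2 + ∑ i, s i • y i‖ + ‖q.2 + ∑ i, t i • y i‖)
          + (r * ∑ i, |s i| + r * ∑ i, |t i|) := by
          rw [h1, h2]
          exact add_le_add (add_le_add (norm_add_le _ _) (norm_add_le _ _)) h3
      _ = _ := by ring
  by_contra hcon
  push_neg at hcon
  have h1 : afun x y r (p + q) - afun x y r q ≤ afun x y r p := by
    refine le_csInf (aset_nonempty p) fun a ha => ?_
    have h2 : afun x y r (p + q) - a ≤ afun x y r q :=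
      le_csInf (aset_nonempty q) fun b hb => by linarith [key a ha b hb]
    linarith
  linarith

include hr0 in
theorem afun_smul_le (c : ℝ) (p : E × F) :
    afun x y r (c • p) ≤ |c| * afun x y r p := by
  rcases eq_or_ne c 0 with rfl | hc
  · simp [afun_zero hr0, afun_nonneg hr0]
  · have hcpos : 0 < |c| := abs_pos.mpr hc
    rw [← div_le_iff₀' hcpos]
    refine le_csInf (aset_nonempty p) ?_
    rintro a ⟨s, rfl⟩
    rw [div_le_iff₀' hcpos]
    have h := afun_le (x := x) (y := y) (r := r) hr0 (p := c • p) (c • s)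
    refine h.trans (le_of_eq ?_)
    have h1 : (c • p).1 - ∑ i, (c • s) i • x i = c • (p.1 - ∑ i, s i • x i) := by
      simp [smul_smul, Finset.smul_sum, smul_sub]
    have h2 : (c • p).2 + ∑ i, (c • s) i • y i = c • (p.2 + ∑ i, s i • y i) := by
      simp [smul_smul, Finset.smul_sum, smul_add]
    have h3 : ∑ i, |(c • s) i| = |c| * ∑ i, |s i| := by
      rw [Finset.mul_sum]; exact Finset.sum_congr rfl fun i _ => by
        simp [abs_mul]
    rw [h1, h2, h3, norm_smul, norm_smul, Real.norm_eq_abs]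
    ring

variable (hkey : ∀ s : Fin k → ℝ,
  |‖∑ i, s i • x i‖ - ‖∑ i, s i • y i‖| ≤ r * ∑ i, |s i|)

include hr0 hkey in
theorem afun_fst (e : E) : afun x y r ((e, 0) : E × F) = ‖e‖ := by
  refine le_antisymm ?_ ?_
  · have := afun_le (x := x) (y := y) (r := r) hr0 (p := ((e, 0) : E × F)) 0
    simpa using this
  · refine le_csInf (aset_nonempty _) ?_
    rintro c ⟨s, rfl⟩
    have h1 : ‖e‖ ≤ ‖e - ∑ i, s i • x i‖ + ‖∑ i, s i • x i‖ := by
      simpa using norm_add_le (e - ∑ i, s i • x i) (∑ i, s i • x i)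
    have h2 : ‖∑ i, s i • x i‖ - ‖∑ i, s i • y i‖ ≤ r * ∑ i, |s i| :=
      (le_abs_self _).trans (hkey s)
    simp only
    calc ‖e‖ ≤ ‖e - ∑ i, s i • x i‖ + ‖∑ i, s i • x i‖ := h1
      _ ≤ ‖e - ∑ i, s i • x i‖ + (‖∑ i, s i • y i‖ + r * ∑ i, |s i|) := by linarith
      _ = ‖e - ∑ i, s i • x i‖ + ‖(0:F) + ∑ i, s i • y i‖ + r * ∑ i, |s i| := by
          rw [zero_add]; ring
  
include hr0 hkey in
theorem afun_snd (f : F) : afun x y r ((0, f) : E × F) = ‖f‖ := by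
  refine le_antisymm ?_ ?_
  · have := afun_le (x := x) (y := y) (r := r) hr0 (p := ((0, f) : E × F)) 0
    simpa using this
  · refine le_csInf (aset_nonempty _) ?_
    rintro c ⟨s, rfl⟩
    have h1 : ‖f‖ ≤ ‖f + ∑ i, s i • y i‖ + ‖∑ i, s i • y i‖ := by
      simpa using norm_add_le (f + ∑ i, s i • y i) (-∑ i, s i • y i)
    have h2 : ‖∑ i, s i • y i‖ - ‖∑ i, s i • x i‖ ≤ r * ∑ i, |s i| := by
      have := hkey s
      rw [abs_sub_comm] at this
      exact (le_abs_self _).trans this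
    have h3 : ‖((0,f) : E × F).1 - ∑ i, s i • x i‖ = ‖∑ i, s i • x i‖ := by
      simp
    simp only [h3]
    calc ‖f‖ ≤ ‖f + ∑ i, s i • y i‖ + ‖∑ i, s i • y i‖ := h1
      _ ≤ ‖f + ∑ i, s i • y i‖ + (‖∑ i, s i • x i‖ + r * ∑ i, |s i|) := by linarith
      _ = ‖∑ i, s i • x i‖ + ‖((0,f):E×F).2 + ∑ i, s i • y i‖ + r * ∑ i, |s i| := by
          simp only; ring

include hr0 in
theorem afun_pair_le (i : Fin k) : afun x y r ((x i, -(y i)) : E × F) ≤ r := by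
  have h := afun_le (x := x) (y := y) (r := r) hr0
    (p := ((x i, -(y i)) : E × F)) (fun j => if j = i then 1 else 0)
  have h1 : ∑ j, (if j = i then (1:ℝ) else 0) • x j = x i := by
    simp [ite_smul]
  have h2 : ∑ j, (if j = i then (1:ℝ) else 0) • y j = y i := by
    simp [ite_smul]
  have h3 : ∑ j : Fin k, |if j = i then (1:ℝ) else 0| = 1 := by
    simp [apply_ite abs]
  rw [h1, h2, h3] at h
  simpa using h

end HensonAux

/-- Type synonym for the amalgamated space carrier. -/
def HensonAux.Amalg (E : Type u) (F : Type v) : Type (max u v) := E × F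

namespace HensonAux

instance (E : Type u) (F : Type v) [AddCommGroup E] [AddCommGroup F] :
    AddCommGroup (Amalg E F) := inferInstanceAs (AddCommGroup (E × F))

instance (E : Type u) (F : Type v) [AddCommGroup E] [AddCommGroup F]
    [Module ℝ E] [Module ℝ F] : Module ℝ (Amalg E F) :=
  inferInstanceAs (Module ℝ (E × F))

/-- identity map into the synonym. -/
def amalgMk {E : Type u} {F : Type v} (p : E × F) : Amalg E F := p

end HensonAux

open HensonAux in
/-- Henson's amalgamation distance: for tuples `x` in `E` and `y` in `F`, with
`r = sup { |‖∑ sᵢxᵢ‖ - ‖∑ sᵢyᵢ‖| : ∑ |sᵢ| = 1 }`, there are linear isometric embeddings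
of `E` and `F` into a common normed space with `‖xᵢ - yᵢ‖ ≤ r` for all `i`, and `r` is
least with this property. -/
theorem henson_amalgamation_distance (E : Type u) (F : Type v)
    [NormedAddCommGroup E] [NormedSpace ℝ E] [NormedAddCommGroup F] [NormedSpace ℝ F]
    (k : ℕ) (hk : 1 ≤ k) (x : Fin k → E) (y : Fin k → F) (r : ℝ)
    (hr : r = sSup {t : ℝ | ∃ s : Fin k → ℝ, (∑ i, |s i|) = 1 ∧
      t = |‖∑ i, s i • x i‖ - ‖∑ i, s i • y i‖|}) :
    (∃ (V : Type (max u v)) (_ : NormedAddCommGroup V) (_ : NormedSpace ℝ V)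
      (f : E →ₗᵢ[ℝ] V) (g : F →ₗᵢ[ℝ] V), ∀ i, ‖f (x i) - g (y i)‖ ≤ r) ∧
    ∀ (W : Type w) (_ : NormedAddCommGroup W) (_ : NormedSpace ℝ W)
      (f' : E →ₗᵢ[ℝ] W) (g' : F →ₗᵢ[ℝ] W), ∃ i, r ≤ ‖f' (x i) - g' (y i)‖ := by
  classical
  set S := {t : ℝ | ∃ s : Fin k → ℝ, (∑ i, |s i|) = 1 ∧
      t = |‖∑ i, s i • x i‖ - ‖∑ i, s i • y i‖|} with hS
  have hone : ∀ i0 : Fin k, (∑ j : Fin k, |if j = i0 then (1:ℝ) else 0|) = 1 := by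
    intro i0; simp [apply_ite abs]
  have hne : S.Nonempty := by
    refine ⟨_, fun j => if j = ⟨0, hk⟩ then (1:ℝ) else 0, hone _, rfl⟩
  have hbdd : BddAbove S := by
    refine ⟨(∑ i, ‖x i‖) + ∑ i, ‖y i‖, ?_⟩
    rintro t ⟨s, hs1, rfl⟩
    have hsb : ∀ i : Fin k, |s i| ≤ 1 := by
      intro i
      rw [← hs1]
      exact Finset.single_le_sum (fun j _ => abs_nonneg (s j)) (Finset.mem_univ i)
    have hA : ‖∑ i, s i • x i‖ ≤ ∑ i, ‖x i‖ := by
      refine (norm_sum_le _ _).trans (Finset.sum_le_sum fun i _ => ?_)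
      rw [norm_smul, Real.norm_eq_abs]
      exact mul_le_of_le_one_left (norm_nonneg _) (hsb i)
    have hB : ‖∑ i, s i • y i‖ ≤ ∑ i, ‖y i‖ := by
      refine (norm_sum_le _ _).trans (Finset.sum_le_sum fun i _ => ?_)
      rw [norm_smul, Real.norm_eq_abs]
      exact mul_le_of_le_one_left (norm_nonneg _) (hsb i)
    calc |‖∑ i, s i • x i‖ - ‖∑ i, s i • y i‖|
        ≤ |‖∑ i, s i • x i‖| + |‖∑ i, s i • y i‖| := abs_sub _ _
      _ = ‖∑ i, s i • x i‖ + ‖∑ i, s i • y i‖ := by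
          rw [abs_of_nonneg (norm_nonneg _), abs_of_nonneg (norm_nonneg _)]
      _ ≤ _ := add_le_add hA hB
  have hr0 : 0 ≤ r := by
    obtain ⟨t, ht⟩ := hne
    have h1 : 0 ≤ t := by obtain ⟨s, -, rfl⟩ := ht; exact abs_nonneg _
    exact h1.trans (hr ▸ le_csSup hbdd ht)
  have hkey : ∀ s : Fin k → ℝ,
      |‖∑ i, s i • x i‖ - ‖∑ i, s i • y i‖| ≤ r * ∑ i, |s i| := by
    intro s
    rcases eq_or_ne (∑ i, |s i|) 0 with hs | hs
    · have hz : ∀ i, s i = 0 := by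
        intro i
        have := (Finset.sum_eq_zero_iff_of_nonneg
          (fun j _ => abs_nonneg (s j))).mp hs i (Finset.mem_univ i)
        exact abs_eq_zero.mp this
      have hx0 : (∑ i, s i • x i) = 0 := by
        refine Finset.sum_eq_zero fun i _ => by rw [hz i, zero_smul]
      have hy0 : (∑ i, s i • y i) = 0 := by
        refine Finset.sum_eq_zero fun i _ => by rw [hz i, zero_smul]
      rw [hx0, hy0, hs]
      simp
    · set c := ∑ i, |s i| with hc
      have hcpos : 0 < c :=
        lt_of_le_of_ne (Finset.sum_nonneg fun i _ => abs_nonneg _) (Ne.symm hs)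
      have hmem : |‖∑ i, (c⁻¹ * s i) • x i‖ - ‖∑ i, (c⁻¹ * s i) • y i‖| ∈ S := by
        refine ⟨fun i => c⁻¹ * s i, ?_, rfl⟩
        have : ∀ i : Fin k, |c⁻¹ * s i| = c⁻¹ * |s i| := fun i => by
          rw [abs_mul, abs_of_pos (inv_pos.mpr hcpos)]
        rw [Finset.sum_congr rfl fun i _ => this i, ← Finset.mul_sum, ← hc,
          inv_mul_cancel₀ (ne_of_gt hcpos)]
      have hle : |‖∑ i, (c⁻¹ * s i) • x i‖ - ‖∑ i, (c⁻¹ * s i) • y i‖| ≤ r :=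
        hr ▸ le_csSup hbdd hmem
      have hxs : (∑ i, (c⁻¹ * s i) • x i) = c⁻¹ • ∑ i, s i • x i := by
        rw [Finset.smul_sum]
        exact Finset.sum_congr rfl fun i _ => by rw [smul_smul]
      have hys : (∑ i, (c⁻¹ * s i) • y i) = c⁻¹ • ∑ i, s i • y i := by
        rw [Finset.smul_sum]
        exact Finset.sum_congr rfl fun i _ => by rw [smul_smul]
      rw [hxs, hys, norm_smul, norm_smul, Real.norm_eq_abs,
        abs_of_pos (inv_pos.mpr hcpos), ← mul_sub, abs_mul,
        abs_of_pos (inv_pos.mpr hcpos)] at hle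
      calc |‖∑ i, s i • x i‖ - ‖∑ i, s i • y i‖|
          = c * (c⁻¹ * |‖∑ i, s i • x i‖ - ‖∑ i, s i • y i‖|) := by
            field_simp
        _ ≤ c * r := mul_le_mul_of_nonneg_left hle (le_of_lt hcpos)
        _ = r * c := mul_comm _ _
  constructor
  · -- existence of the amalgam
    letI : SeminormedAddCommGroup (Amalg E F) :=
      AddGroupSeminorm.toSeminormedAddCommGroup
        { toFun := fun p => afun x y r (p : E × F)
          map_zero' := afun_zero hr0
          add_le' := fun p q => afun_add_le hr0 p q
          neg' := fun p => afun_neg hr0 p }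
    letI : NormedSpace ℝ (Amalg E F) :=
      ⟨fun c p => by
        have h := afun_smul_le (x := x) (y := y) hr0 c p
        rw [Real.norm_eq_abs]; exact h⟩
    refine ⟨SeparationQuotient (Amalg E F), inferInstance, inferInstance,
      ⟨⟨⟨fun e => SeparationQuotient.mk (amalgMk (e, 0)), ?_⟩, ?_⟩, ?_⟩,
      ⟨⟨⟨fun f => SeparationQuotient.mk (amalgMk (0, f)), ?_⟩, ?_⟩, ?_⟩, ?_⟩
    · intro a b
      have h : amalgMk ((a + b : E), (0:F)) = amalgMk (a, 0) + amalgMk (b, 0) := by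
        show ((a + b, 0) : E × F) = (a, 0) + (b, 0)
        exact Prod.ext rfl (add_zero (0:F)).symm
      show SeparationQuotient.mk (amalgMk ((a + b : E), (0:F)))
        = SeparationQuotient.mk (amalgMk (a, 0)) + SeparationQuotient.mk (amalgMk (b, 0))
      rw [h, SeparationQuotient.mk_add]
    · intro c a
      have h : amalgMk ((c • a : E), (0:F)) = c • amalgMk (a, 0) := by
        show ((c • a, 0) : E × F) = c • (a, 0)
        exact Prod.ext rfl (smul_zero c).symm
      show SeparationQuotient.mk (amalgMk ((c • a : E), (0:F)))
        = c • SeparationQuotient.mk (amalgMk (a, 0))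
      rw [h, SeparationQuotient.mk_smul]
    · intro e
      exact afun_fst hr0 hkey e
    · intro a b
      have h : amalgMk ((0:E), a + b) = amalgMk (0, a) + amalgMk (0, b) := by
        show ((0, a + b) : E × F) = (0, a) + (0, b)
        exact Prod.ext (add_zero (0:E)).symm rfl
      show SeparationQuotient.mk (amalgMk ((0:E), a + b))
        = SeparationQuotient.mk (amalgMk (0, a)) + SeparationQuotient.mk (amalgMk (0, b))
      rw [h, SeparationQuotient.mk_add]
    · intro c a
      have h : amalgMk ((0:E), c • a) = c • amalgMk (0, a) := by
        show ((0, c • a) : E × F) = c • (0, a)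
        exact Prod.ext (smul_zero c).symm rfl
      show SeparationQuotient.mk (amalgMk ((0:E), c • a))
        = c • SeparationQuotient.mk (amalgMk (0, a))
      rw [h, SeparationQuotient.mk_smul]
    · intro f
      exact afun_snd hr0 hkey f
    · intro i
      have h : amalgMk ((x i, (0:F))) - amalgMk ((0:E), y i)
          = amalgMk (x i, -(y i)) := by
        show ((x i, 0) : E × F) - (0, y i) = (x i, -(y i))
        exact Prod.ext (sub_zero (x i)) (zero_sub (y i))
      show ‖SeparationQuotient.mk (amalgMk (x i, 0))
          - SeparationQuotient.mk (amalgMk (0, y i))‖ ≤ r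
      rw [← SeparationQuotient.mk_sub, h]
      exact afun_pair_le hr0 i
  · -- minimality
    intro W _ _ f' g'
    obtain ⟨i0, hi0⟩ : ∃ i0 : Fin k, ∀ j,
        ‖f' (x j) - g' (y j)‖ ≤ ‖f' (x i0) - g' (y i0)‖ := by
      obtain ⟨i0, -, h⟩ := Finset.exists_max_image Finset.univ
        (fun j => ‖f' (x j) - g' (y j)‖) ⟨⟨0, hk⟩, Finset.mem_univ _⟩
      exact ⟨i0, fun j => h j (Finset.mem_univ j)⟩
    refine ⟨i0, ?_⟩
    rw [hr]
    refine Real.sSup_le ?_ (norm_nonneg _)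
    rintro t ⟨s, hs1, rfl⟩
    have e1 : ‖∑ i, s i • x i‖ = ‖∑ i, s i • f' (x i)‖ := by
      rw [← f'.norm_map]
      congr 1
      rw [map_sum]
      exact Finset.sum_congr rfl fun i _ => f'.map_smul _ _
    have e2 : ‖∑ i, s i • y i‖ = ‖∑ i, s i • g' (y i)‖ := by
      rw [← g'.norm_map]
      congr 1
      rw [map_sum]
      exact Finset.sum_congr rfl fun i _ => g'.map_smul _ _
    rw [e1, e2]
    calc |‖∑ i, s i • f' (x i)‖ - ‖∑ i, s i • g' (y i)‖|
        ≤ ‖∑ i, s i • f' (x i) - ∑ i, s i • g' (y i)‖ := abs_norm_sub_norm_le _ _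
      _ = ‖∑ i, s i • (f' (x i) - g' (y i))‖ := by
          rw [← Finset.sum_sub_distrib]
          exact congrArg _ (Finset.sum_congr rfl fun i _ => (smul_sub _ _ _).symm)
      _ ≤ ∑ i, ‖s i • (f' (x i) - g' (y i))‖ := norm_sum_le _ _
      _ ≤ ∑ i, |s i| * ‖f' (x i0) - g' (y i0)‖ := by
          refine Finset.sum_le_sum fun i _ => ?_
          rw [norm_smul, Real.norm_eq_abs]
          exact mul_le_mul_of_nonneg_left (hi0 i) (abs_nonneg _)
      _ = ‖f' (x i0) - g' (y i0)‖ := by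
          rw [← Finset.sum_mul, hs1, one_mul]
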